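/- Let G be a connected bipartite graph that is not a star, and let γ be a total 2-colouring of G with colours 1 and 2 such that the vertices in one part of the bipartition all have even sums σ^T_γ and the vertices in the other part all have odd sums, the number of elements coloured 2 is non-zero, and the number of elements coloured 1 strictly exceeds the number coloured 2. Then there exists a total 2-colouring γ' of G with the same parity property (vertices in one part have even sums, in the other part odd sums) that uses exactly one more 2 (and hence one fewer 1) than γ. -/

import Mathlib

open Finset

variable {V : Type*} [Fintype V] [DecidableEq V]

/-- The vertex sum at `v` induced by an edge colouring `γ`:
the sum of the colours of the edges incident with `v`. -/
def vSum (G : SimpleGraph V) [DecidableRel G.Adj] (γ : Sym2 V → ℕ) (v : V) : ℕ :=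
  ∑ u ∈ G.neighborFinset v, γ s(v, u)

/-- `γ` is an edge `k`-colouring: every edge gets a colour in `{1, …, k}`. -/
def IsEdgeKColoring (G : SimpleGraph V) (k : ℕ) (γ : Sym2 V → ℕ) : Prop :=
  ∀ e ∈ G.edgeSet, 1 ≤ γ e ∧ γ e ≤ k

/-- `γ` is a neighbour-sum-distinguishing edge colouring. -/
def NsdEdge (G : SimpleGraph V) [DecidableRel G.Adj] (γ : Sym2 V → ℕ) : Prop :=
  ∀ ⦃u v : V⦄, G.Adj u v → vSum G γ u ≠ vSum G γ v

/-- The number of edges of `G` coloured `i` by `γ`. -/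
def edgeClassCard (G : SimpleGraph V) [DecidableRel G.Adj] (γ : Sym2 V → ℕ) (i : ℕ) : ℕ :=
  (G.edgeFinset.filter fun e => γ e = i).card

/-- `γ` is equitable as an edge `k`-colouring: any two colour classes among
`{1, …, k}` have sizes differing by at most one. -/
def EquitableEdge (G : SimpleGraph V) [DecidableRel G.Adj] (k : ℕ) (γ : Sym2 V → ℕ) : Prop :=
  ∀ i ∈ Finset.Icc 1 k, ∀ j ∈ Finset.Icc 1 k,
    edgeClassCard G γ i ≤ edgeClassCard G γ j + 1

/-- `G` admits an equitable neighbour-sum-distinguishing edge `k`-colouring. -/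
def HasEqNsdEdge (G : SimpleGraph V) [DecidableRel G.Adj] (k : ℕ) : Prop :=
  ∃ γ : Sym2 V → ℕ, IsEdgeKColoring G k γ ∧ NsdEdge G γ ∧ EquitableEdge G k γ

/-- The total vertex sum at `v` induced by a total colouring `(fv, fe)`. -/
def tSum (G : SimpleGraph V) [DecidableRel G.Adj] (fv : V → ℕ) (fe : Sym2 V → ℕ) (v : V) : ℕ :=
  fv v + vSum G fe v

/-- `(fv, fe)` is a total `k`-colouring: each vertex and edge gets a colour in `{1, …, k}`. -/
def IsTotalKColoring (G : SimpleGraph V) (k : ℕ) (fv : V → ℕ) (fe : Sym2 V → ℕ) : Prop :=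
  (∀ v : V, 1 ≤ fv v ∧ fv v ≤ k) ∧ ∀ e ∈ G.edgeSet, 1 ≤ fe e ∧ fe e ≤ k

/-- `(fv, fe)` is a neighbour-sum-distinguishing total colouring. -/
def NsdTotal (G : SimpleGraph V) [DecidableRel G.Adj] (fv : V → ℕ) (fe : Sym2 V → ℕ) : Prop :=
  ∀ ⦃u v : V⦄, G.Adj u v → tSum G fv fe u ≠ tSum G fv fe v

/-- The number of elements (vertices and edges) of `G` coloured `i`. -/
def totalClassCard (G : SimpleGraph V) [DecidableRel G.Adj]
    (fv : V → ℕ) (fe : Sym2 V → ℕ) (i : ℕ) : ℕ :=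
  (Finset.univ.filter fun v => fv v = i).card + edgeClassCard G fe i

/-- `(fv, fe)` is equitable as a total `k`-colouring. -/
def EquitableTotal (G : SimpleGraph V) [DecidableRel G.Adj] (k : ℕ)
    (fv : V → ℕ) (fe : Sym2 V → ℕ) : Prop :=
  ∀ i ∈ Finset.Icc 1 k, ∀ j ∈ Finset.Icc 1 k,
    totalClassCard G fv fe i ≤ totalClassCard G fv fe j + 1

/-- `G` admits an equitable neighbour-sum-distinguishing total `k`-colouring. -/
def HasEqNsdTotal (G : SimpleGraph V) [DecidableRel G.Adj] (k : ℕ) : Prop :=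
  ∃ (fv : V → ℕ) (fe : Sym2 V → ℕ),
    IsTotalKColoring G k fv fe ∧ NsdTotal G fv fe ∧ EquitableTotal G k fv fe

lemma move_generic (G : SimpleGraph V) [DecidableRel G.Adj]
    (fv : V → ℕ) (fe : Sym2 V → ℕ) (hcol : IsTotalKColoring G 2 fv fe)
    (Sv : Finset V) (Fe : Finset (Sym2 V)) (hFe : Fe ⊆ G.edgeFinset)
    (hcov : ∀ v : V, ((if v ∈ Sv then 1 else 0) + (Fe.filter (fun e => v ∈ e)).card) % 2 = 0)
    (hbal : (Sv.filter (fun v => fv v = 2)).card + (Fe.filter (fun e => fe e = 2)).card + 1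
          = (Sv.filter (fun v => fv v = 1)).card + (Fe.filter (fun e => fe e = 1)).card) :
    ∃ (fv' : V → ℕ) (fe' : Sym2 V → ℕ),
      IsTotalKColoring G 2 fv' fe' ∧
      (∀ v, tSum G fv' fe' v % 2 = tSum G fv fe v % 2) ∧
      totalClassCard G fv' fe' 2 = totalClassCard G fv fe 2 + 1 ∧
      totalClassCard G fv' fe' 1 + 1 = totalClassCard G fv fe 1 := by
  classical
  refine ⟨fun v => if v ∈ Sv then 3 - fv v else fv v,
          fun e => if e ∈ Fe then 3 - fe e else fe e, ⟨?_, ?_⟩, ?_, ?_, ?_⟩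
  · intro v
    have := hcol.1 v
    simp only []
    split_ifs <;> omega
  · intro e he
    have := hcol.2 e he
    simp only []
    split_ifs <;> omega
  · -- parity
    intro v
    have hmod : ∀ a b : ℕ, (a : ZMod 2) = (b : ZMod 2) → a % 2 = b % 2 :=
      fun a b h => (ZMod.natCast_eq_natCast_iff a b 2).mp h
    apply hmod
    simp only [tSum, vSum, Nat.cast_add, Nat.cast_sum]
    have hterm : ∀ u ∈ G.neighborFinset v,
        (((if s(v,u) ∈ Fe then 3 - fe s(v,u) else fe s(v,u)) : ℕ) : ZMod 2)
        = (fe s(v,u) : ZMod 2) + (if s(v,u) ∈ Fe then 1 else 0) := by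
      intro u hu
      have hadj : G.Adj v u := (G.mem_neighborFinset v u).mp hu
      have hb := hcol.2 s(v,u) ((SimpleGraph.mem_edgeSet G).mpr hadj)
      have h12 : fe s(v,u) = 1 ∨ fe s(v,u) = 2 := by omega
      rcases h12 with h | h <;> rw [h] <;> split_ifs <;> decide
    rw [Finset.sum_congr rfl hterm, Finset.sum_add_distrib, Finset.sum_boole]
    have hbij : ((G.neighborFinset v).filter (fun u => s(v,u) ∈ Fe)).card
        = (Fe.filter (fun e => v ∈ e)).card := by
      apply Finset.card_bij (fun u _ => s(v,u))
      · intro a ha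
        simp only [mem_filter] at ha ⊢
        exact ⟨ha.2, Sym2.mem_mk_left v a⟩
      · intro a _ b _ h
        exact Sym2.congr_right.mp h
      · intro e he
        simp only [mem_filter] at he
        obtain ⟨u, rfl⟩ := Sym2.mem_iff_exists.mp he.2
        refine ⟨u, ?_, rfl⟩
        simp only [mem_filter, SimpleGraph.mem_neighborFinset]
        exact ⟨(SimpleGraph.mem_edgeSet G).mp (SimpleGraph.mem_edgeFinset.mp (hFe he.1)), he.1⟩
    have hvx : (((if v ∈ Sv then 3 - fv v else fv v) : ℕ) : ZMod 2)
        = (fv v : ZMod 2) + (if v ∈ Sv then 1 else 0) := by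
      have hb := hcol.1 v
      have h12 : fv v = 1 ∨ fv v = 2 := by omega
      rcases h12 with h | h <;> rw [h] <;> split_ifs <;> decide
    rw [hvx, hbij]
    have hz : ((if v ∈ Sv then (1:ZMod 2) else 0) + ((Fe.filter (fun e => v ∈ e)).card : ZMod 2)) = 0 := by
      have h0 := hcov v
      have : (((if v ∈ Sv then 1 else 0) + (Fe.filter (fun e => v ∈ e)).card : ℕ) : ZMod 2) = 0 :=
        (ZMod.natCast_eq_zero_iff _ 2).mpr (Nat.dvd_of_mod_eq_zero h0)
      push_cast at this
      exact this
    linear_combination hz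
  all_goals {
    have hVsplit : ∀ (p : V → Prop) (_ : DecidablePred p),
        (univ.filter p).card = (Sv.filter p).card + (Svᶜ.filter p).card := by
      intro p _
      rw [← Finset.card_union_of_disjoint (Finset.disjoint_filter_filter disjoint_compl_right),
        ← Finset.filter_union, Finset.union_compl]
    have hEsplit : ∀ (p : Sym2 V → Prop) (_ : DecidablePred p),
        (G.edgeFinset.filter p).card = (Fe.filter p).card + ((G.edgeFinset \ Fe).filter p).card := by
      intro p _
      rw [← Finset.card_union_of_disjoint (Finset.disjoint_filter_filter Finset.disjoint_sdiff),
        ← Finset.filter_union, Finset.union_sdiff_of_subset hFe]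
    simp only [totalClassCard, edgeClassCard]
    rw [hVsplit _ inferInstance, hVsplit _ inferInstance, hEsplit _ inferInstance,
      hEsplit _ inferInstance]
    have h1 : Sv.filter (fun x => (if x ∈ Sv then 3 - fv x else fv x) = 2)
        = Sv.filter (fun x => fv x = 1) := by
      apply Finset.filter_congr
      intro x hx
      rw [if_pos hx]
      have := hcol.1 x
      omega
    have h1' : Sv.filter (fun x => (if x ∈ Sv then 3 - fv x else fv x) = 1)
        = Sv.filter (fun x => fv x = 2) := by
      apply Finset.filter_congr
      intro x hx
      rw [if_pos hx]
      have := hcol.1 x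
      omega
    have h2 : ∀ i, Svᶜ.filter (fun x => (if x ∈ Sv then 3 - fv x else fv x) = i)
        = Svᶜ.filter (fun x => fv x = i) := by
      intro i
      apply Finset.filter_congr
      intro x hx
      rw [if_neg (Finset.mem_compl.mp hx)]
    have h3 : Fe.filter (fun e => (if e ∈ Fe then 3 - fe e else fe e) = 2)
        = Fe.filter (fun e => fe e = 1) := by
      apply Finset.filter_congr
      intro e he
      rw [if_pos he]
      have := hcol.2 e (SimpleGraph.mem_edgeFinset.mp (hFe he))
      omega
    have h3' : Fe.filter (fun e => (if e ∈ Fe then 3 - fe e else fe e) = 1)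
        = Fe.filter (fun e => fe e = 2) := by
      apply Finset.filter_congr
      intro e he
      rw [if_pos he]
      have := hcol.2 e (SimpleGraph.mem_edgeFinset.mp (hFe he))
      omega
    have h4 : ∀ i, (G.edgeFinset \ Fe).filter (fun e => (if e ∈ Fe then 3 - fe e else fe e) = i)
        = (G.edgeFinset \ Fe).filter (fun e => fe e = i) := by
      intro i
      apply Finset.filter_congr
      intro e he
      rw [if_neg (Finset.mem_sdiff.mp he).2]
    rw [h2, h4]
    try rw [h1, h3]
    try rw [h1', h3']
    omega }

private lemma ite_two {a : ℕ} (h1 : 1 ≤ a) (h2 : a ≤ 2) : (if a = 2 then (1:ℕ) else 0) = a - 1 := by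
  split_ifs with h <;> omega

private lemma ite_one {a : ℕ} (h1 : 1 ≤ a) (h2 : a ≤ 2) : (if a = 1 then (1:ℕ) else 0) = 2 - a := by
  split_ifs with h <;> omega

lemma move_path1 (G : SimpleGraph V) [DecidableRel G.Adj]
    (fv : V → ℕ) (fe : Sym2 V → ℕ) (hcol : IsTotalKColoring G 2 fv fe)
    (u v : V) (huv : G.Adj u v) (hsum : fv u + fv v + fe s(u,v) = 4) :
    ∃ (fv' : V → ℕ) (fe' : Sym2 V → ℕ),
      IsTotalKColoring G 2 fv' fe' ∧
      (∀ w, tSum G fv' fe' w % 2 = tSum G fv fe w % 2) ∧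
      totalClassCard G fv' fe' 2 = totalClassCard G fv fe 2 + 1 ∧
      totalClassCard G fv' fe' 1 + 1 = totalClassCard G fv fe 1 := by
  have hne : u ≠ v := huv.ne
  have hb1 := hcol.1 u
  have hb2 := hcol.1 v
  have hbe := hcol.2 s(u,v) ((SimpleGraph.mem_edgeSet G).mpr huv)
  apply move_generic G fv fe hcol {u, v} {s(u,v)}
  · simp only [Finset.singleton_subset_iff, SimpleGraph.mem_edgeFinset]
    exact (SimpleGraph.mem_edgeSet G).mpr huv
  · intro x
    rw [Finset.card_filter, Finset.sum_singleton]
    simp only [Finset.mem_insert, Finset.mem_singleton, Sym2.mem_iff]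
    by_cases h : x = u ∨ x = v <;> simp [h]
  · rw [Finset.card_filter, Finset.card_filter, Finset.card_filter, Finset.card_filter,
      Finset.sum_pair hne, Finset.sum_pair hne, Finset.sum_singleton, Finset.sum_singleton,
      ite_two hb1.1 hb1.2, ite_two hb2.1 hb2.2, ite_two hbe.1 hbe.2,
      ite_one hb1.1 hb1.2, ite_one hb2.1 hb2.2, ite_one hbe.1 hbe.2]
    omega

lemma move_path3 (G : SimpleGraph V) [DecidableRel G.Adj]
    (fv : V → ℕ) (fe : Sym2 V → ℕ) (hcol : IsTotalKColoring G 2 fv fe)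
    (v0 v1 v2 v3 : V)
    (h01 : G.Adj v0 v1) (h12 : G.Adj v1 v2) (h23 : G.Adj v2 v3)
    (h02 : v0 ≠ v2) (h03 : v0 ≠ v3) (h13 : v1 ≠ v3)
    (hsum : fv v0 + fv v3 + (fe s(v0,v1) + fe s(v1,v2) + fe s(v2,v3)) = 7) :
    ∃ (fv' : V → ℕ) (fe' : Sym2 V → ℕ),
      IsTotalKColoring G 2 fv' fe' ∧
      (∀ w, tSum G fv' fe' w % 2 = tSum G fv fe w % 2) ∧
      totalClassCard G fv' fe' 2 = totalClassCard G fv fe 2 + 1 ∧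
      totalClassCard G fv' fe' 1 + 1 = totalClassCard G fv fe 1 := by
  have n01 : v0 ≠ v1 := h01.ne
  have n12 : v1 ≠ v2 := h12.ne
  have n23 : v2 ≠ v3 := h23.ne
  have he12 : s(v0,v1) ≠ s(v1,v2) := by
    intro h
    rcases Sym2.eq_iff.mp h with ⟨h, -⟩ | ⟨h, -⟩
    exacts [n01 h, h02 h]
  have he13 : s(v0,v1) ≠ s(v2,v3) := by
    intro h
    rcases Sym2.eq_iff.mp h with ⟨h, -⟩ | ⟨h, -⟩
    exacts [h02 h, h03 h]
  have he23 : s(v1,v2) ≠ s(v2,v3) := by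
    intro h
    rcases Sym2.eq_iff.mp h with ⟨h, -⟩ | ⟨h, -⟩
    exacts [n12 h, h13 h]
  have hb0 := hcol.1 v0
  have hb3 := hcol.1 v3
  have hbe1 := hcol.2 s(v0,v1) ((SimpleGraph.mem_edgeSet G).mpr h01)
  have hbe2 := hcol.2 s(v1,v2) ((SimpleGraph.mem_edgeSet G).mpr h12)
  have hbe3 := hcol.2 s(v2,v3) ((SimpleGraph.mem_edgeSet G).mpr h23)
  have hFsum : ∀ (p : Sym2 V → ℕ),
      (∑ e ∈ ({s(v0,v1), s(v1,v2), s(v2,v3)} : Finset (Sym2 V)), p e)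
      = p s(v0,v1) + p s(v1,v2) + p s(v2,v3) := by
    intro p
    rw [Finset.sum_insert (by simp [he12, he13]), Finset.sum_insert (by simp [he23]),
      Finset.sum_singleton]
    ring
  apply move_generic G fv fe hcol {v0, v3} {s(v0,v1), s(v1,v2), s(v2,v3)}
  · intro e he
    simp only [Finset.mem_insert, Finset.mem_singleton] at he
    rcases he with rfl | rfl | rfl <;> rw [SimpleGraph.mem_edgeFinset] <;>
      exact (SimpleGraph.mem_edgeSet G).mpr (by assumption)
  · intro x
    rw [Finset.card_filter, hFsum]
    rcases eq_or_ne x v0 with rfl | hx0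
    · simp [Sym2.mem_iff, n01, h02, h03, h02.symm]
    rcases eq_or_ne x v1 with rfl | hx1
    · simp [Sym2.mem_iff, n01.symm, n12, h13]
    rcases eq_or_ne x v2 with rfl | hx2
    · simp [Sym2.mem_iff, h02.symm, n12.symm, n23]
    rcases eq_or_ne x v3 with rfl | hx3
    · simp [Sym2.mem_iff, h03.symm, h13.symm, n23.symm]
    · simp [Sym2.mem_iff, hx0, hx1, hx2, hx3]
  · rw [Finset.card_filter, Finset.card_filter, Finset.card_filter, Finset.card_filter,
      Finset.sum_pair h03, Finset.sum_pair h03, hFsum, hFsum,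
      ite_two hb0.1 hb0.2, ite_two hb3.1 hb3.2,
      ite_two hbe1.1 hbe1.2, ite_two hbe2.1 hbe2.2, ite_two hbe3.1 hbe3.2,
      ite_one hb0.1 hb0.2, ite_one hb3.1 hb3.2,
      ite_one hbe1.1 hbe1.2, ite_one hbe2.1 hbe2.2, ite_one hbe3.1 hbe3.2]
    omega

lemma move_path5 (G : SimpleGraph V) [DecidableRel G.Adj]
    (fv : V → ℕ) (fe : Sym2 V → ℕ) (hcol : IsTotalKColoring G 2 fv fe)
    (v0 v1 v2 v3 v4 v5 : V)
    (h01 : G.Adj v0 v1) (h12 : G.Adj v1 v2) (h23 : G.Adj v2 v3)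
    (h34 : G.Adj v3 v4) (h45 : G.Adj v4 v5)
    (h02 : v0 ≠ v2) (h03 : v0 ≠ v3) (h04 : v0 ≠ v4) (h05 : v0 ≠ v5)
    (h13 : v1 ≠ v3) (h14 : v1 ≠ v4) (h15 : v1 ≠ v5)
    (h24 : v2 ≠ v4) (h25 : v2 ≠ v5) (h35 : v3 ≠ v5)
    (hsum : fv v0 + fv v5 +
      (fe s(v0,v1) + fe s(v1,v2) + fe s(v2,v3) + fe s(v3,v4) + fe s(v4,v5)) = 10) :
    ∃ (fv' : V → ℕ) (fe' : Sym2 V → ℕ),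
      IsTotalKColoring G 2 fv' fe' ∧
      (∀ w, tSum G fv' fe' w % 2 = tSum G fv fe w % 2) ∧
      totalClassCard G fv' fe' 2 = totalClassCard G fv fe 2 + 1 ∧
      totalClassCard G fv' fe' 1 + 1 = totalClassCard G fv fe 1 := by
  have n01 : v0 ≠ v1 := h01.ne
  have n12 : v1 ≠ v2 := h12.ne
  have n23 : v2 ≠ v3 := h23.ne
  have n34 : v3 ≠ v4 := h34.ne
  have n45 : v4 ≠ v5 := h45.ne
  have hne : ∀ (a b c d : V), a ≠ c → a ≠ d → s(a,b) ≠ s(c,d) := by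
    intro a b c d hac had h
    rcases Sym2.eq_iff.mp h with ⟨h, -⟩ | ⟨h, -⟩
    exacts [hac h, had h]
  have he12 := hne v0 v1 v1 v2 n01 h02
  have he13 := hne v0 v1 v2 v3 h02 h03
  have he14 := hne v0 v1 v3 v4 h03 h04
  have he15 := hne v0 v1 v4 v5 h04 h05
  have he23 := hne v1 v2 v2 v3 n12 h13
  have he24 := hne v1 v2 v3 v4 h13 h14
  have he25 := hne v1 v2 v4 v5 h14 h15
  have he34 := hne v2 v3 v3 v4 n23 h24
  have he35 := hne v2 v3 v4 v5 h24 h25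
  have he45 := hne v3 v4 v4 v5 n34 h35
  have hb0 := hcol.1 v0
  have hb5 := hcol.1 v5
  have hbe1 := hcol.2 s(v0,v1) ((SimpleGraph.mem_edgeSet G).mpr h01)
  have hbe2 := hcol.2 s(v1,v2) ((SimpleGraph.mem_edgeSet G).mpr h12)
  have hbe3 := hcol.2 s(v2,v3) ((SimpleGraph.mem_edgeSet G).mpr h23)
  have hbe4 := hcol.2 s(v3,v4) ((SimpleGraph.mem_edgeSet G).mpr h34)
  have hbe5 := hcol.2 s(v4,v5) ((SimpleGraph.mem_edgeSet G).mpr h45)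
  have hFsum : ∀ (p : Sym2 V → ℕ),
      (∑ e ∈ ({s(v0,v1), s(v1,v2), s(v2,v3), s(v3,v4), s(v4,v5)} : Finset (Sym2 V)), p e)
      = p s(v0,v1) + p s(v1,v2) + p s(v2,v3) + p s(v3,v4) + p s(v4,v5) := by
    intro p
    rw [Finset.sum_insert (by simp [he12, he13, he14, he15]),
      Finset.sum_insert (by simp [he23, he24, he25]),
      Finset.sum_insert (by simp [he34, he35]),
      Finset.sum_insert (by simp [he45]),
      Finset.sum_singleton]
    ring
  apply move_generic G fv fe hcol {v0, v5} {s(v0,v1), s(v1,v2), s(v2,v3), s(v3,v4), s(v4,v5)}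
  · intro e he
    simp only [Finset.mem_insert, Finset.mem_singleton] at he
    rcases he with rfl | rfl | rfl | rfl | rfl <;> rw [SimpleGraph.mem_edgeFinset] <;>
      exact (SimpleGraph.mem_edgeSet G).mpr (by assumption)
  · intro x
    rw [Finset.card_filter, hFsum]
    rcases eq_or_ne x v0 with rfl | hx0
    · simp [Sym2.mem_iff, n01, h02, h03, h04, h05]
    rcases eq_or_ne x v1 with rfl | hx1
    · simp [Sym2.mem_iff, n01.symm, n12, h13, h14, h15]
    rcases eq_or_ne x v2 with rfl | hx2
    · simp [Sym2.mem_iff, h02.symm, n12.symm, n23, h24, h25]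
    rcases eq_or_ne x v3 with rfl | hx3
    · simp [Sym2.mem_iff, h03.symm, h13.symm, n23.symm, n34, h35]
    rcases eq_or_ne x v4 with rfl | hx4
    · simp [Sym2.mem_iff, h04.symm, h14.symm, h24.symm, n34.symm, n45]
    rcases eq_or_ne x v5 with rfl | hx5
    · simp [Sym2.mem_iff, h05.symm, h15.symm, h25.symm, h35.symm, n45.symm]
    · simp [Sym2.mem_iff, hx0, hx1, hx2, hx3, hx4, hx5]
  · rw [Finset.card_filter, Finset.card_filter, Finset.card_filter, Finset.card_filter,
      Finset.sum_pair h05, Finset.sum_pair h05, hFsum, hFsum,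
      ite_two hb0.1 hb0.2, ite_two hb5.1 hb5.2,
      ite_two hbe1.1 hbe1.2, ite_two hbe2.1 hbe2.2, ite_two hbe3.1 hbe3.2,
      ite_two hbe4.1 hbe4.2, ite_two hbe5.1 hbe5.2,
      ite_one hb0.1 hb0.2, ite_one hb5.1 hb5.2,
      ite_one hbe1.1 hbe1.2, ite_one hbe2.1 hbe2.2, ite_one hbe3.1 hbe3.2,
      ite_one hbe4.1 hbe4.2, ite_one hbe5.1 hbe5.2]
    omega

/-- Given a connected bipartite graph `G` (bipartition `(X, Xᶜ)`) that is not a star,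
and a total `2`-colouring in which one part has all even sums and the other all odd
sums, with at least one `2` used and strictly more `1`'s than `2`'s, there is a total
`2`-colouring with the same parity property using exactly one more `2` (and one fewer `1`). -/
theorem bipartite_exchange_one_for_two (G : SimpleGraph V) [DecidableRel G.Adj]
    (X : Set V) (hX : ∀ u v : V, G.Adj u v → (u ∈ X ↔ v ∉ X))
    (hconn : G.Connected)
    (hnotstar : ¬ ∃ c : V, ∀ e ∈ G.edgeSet, c ∈ e)
    (fv : V → ℕ) (fe : Sym2 V → ℕ)
    (hcol : IsTotalKColoring G 2 fv fe)
    (hparity : ((∀ v ∈ X, Even (tSum G fv fe v)) ∧ (∀ v ∉ X, Odd (tSum G fv fe v))) ∨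
      ((∀ v ∈ X, Odd (tSum G fv fe v)) ∧ (∀ v ∉ X, Even (tSum G fv fe v))))
    (h2ne : totalClassCard G fv fe 2 ≠ 0)
    (h12 : totalClassCard G fv fe 2 < totalClassCard G fv fe 1) :
    ∃ (fv' : V → ℕ) (fe' : Sym2 V → ℕ),
      IsTotalKColoring G 2 fv' fe' ∧
      (((∀ v ∈ X, Even (tSum G fv' fe' v)) ∧ (∀ v ∉ X, Odd (tSum G fv' fe' v))) ∨
        ((∀ v ∈ X, Odd (tSum G fv' fe' v)) ∧ (∀ v ∉ X, Even (tSum G fv' fe' v)))) ∧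
      totalClassCard G fv' fe' 2 = totalClassCard G fv fe 2 + 1 ∧
      totalClassCard G fv' fe' 1 + 1 = totalClassCard G fv fe 1 := by
  classical
  suffices h : ∃ (fv' : V → ℕ) (fe' : Sym2 V → ℕ),
      IsTotalKColoring G 2 fv' fe' ∧
      (∀ v, tSum G fv' fe' v % 2 = tSum G fv fe v % 2) ∧
      totalClassCard G fv' fe' 2 = totalClassCard G fv fe 2 + 1 ∧
      totalClassCard G fv' fe' 1 + 1 = totalClassCard G fv fe 1 by
    obtain ⟨fv', fe', h1, h2, h3, h4⟩ := h
    refine ⟨fv', fe', h1, ?_, h3, h4⟩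
    have heven : ∀ v, Even (tSum G fv fe v) → Even (tSum G fv' fe' v) := by
      intro v hv
      rw [Nat.even_iff] at hv ⊢
      rw [h2 v]
      exact hv
    have hodd : ∀ v, Odd (tSum G fv fe v) → Odd (tSum G fv' fe' v) := by
      intro v hv
      rw [Nat.odd_iff] at hv ⊢
      rw [h2 v]
      exact hv
    rcases hparity with ⟨he, ho⟩ | ⟨he, ho⟩
    · exact Or.inl ⟨fun v hv => heven v (he v hv), fun v hv => hodd v (ho v hv)⟩
    · exact Or.inr ⟨fun v hv => hodd v (he v hv), fun v hv => heven v (ho v hv)⟩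
  by_contra hno
  push_neg at hnotstar
  -- no-move consequences
  have N1 : ∀ u v : V, G.Adj u v → fv u + fv v + fe s(u,v) ≠ 4 :=
    fun u v huv hsum => hno (move_path1 G fv fe hcol u v huv hsum)
  have N3 : ∀ v0 v1 v2 v3 : V, G.Adj v0 v1 → G.Adj v1 v2 → G.Adj v2 v3 →
      v0 ≠ v2 → v0 ≠ v3 → v1 ≠ v3 →
      fv v0 + fv v3 + (fe s(v0,v1) + fe s(v1,v2) + fe s(v2,v3)) ≠ 7 :=
    fun v0 v1 v2 v3 h01 h12 h23 h02 h03 h13 hsum =>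
      hno (move_path3 G fv fe hcol v0 v1 v2 v3 h01 h12 h23 h02 h03 h13 hsum)
  have N5 : ∀ v0 v1 v2 v3 v4 v5 : V, G.Adj v0 v1 → G.Adj v1 v2 → G.Adj v2 v3 →
      G.Adj v3 v4 → G.Adj v4 v5 →
      v0 ≠ v2 → v0 ≠ v3 → v0 ≠ v4 → v0 ≠ v5 → v1 ≠ v3 → v1 ≠ v4 → v1 ≠ v5 →
      v2 ≠ v4 → v2 ≠ v5 → v3 ≠ v5 →
      fv v0 + fv v5 + (fe s(v0,v1) + fe s(v1,v2) + fe s(v2,v3) + fe s(v3,v4) + fe s(v4,v5)) ≠ 10 :=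
    fun v0 v1 v2 v3 v4 v5 h01 h12 h23 h34 h45 h02 h03 h04 h05 h13 h14 h15 h24 h25 h35 hsum =>
      hno (move_path5 G fv fe hcol v0 v1 v2 v3 v4 v5 h01 h12 h23 h34 h45
        h02 h03 h04 h05 h13 h14 h15 h24 h25 h35 hsum)
  -- basic facts
  have hfv := hcol.1
  have hfe : ∀ u v : V, G.Adj u v → 1 ≤ fe s(u,v) ∧ fe s(u,v) ≤ 2 :=
    fun u v h => hcol.2 _ ((SimpleGraph.mem_edgeSet G).mpr h)
  have hswap : ∀ u v : V, fe s(u,v) = fe s(v,u) := fun u v => by rw [Sym2.eq_swap]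
  have hfv2 : ∀ v, fv v = 1 ∨ fv v = 2 := fun v => by have := hfv v; omega
  have hfe2 : ∀ u v : V, G.Adj u v → fe s(u,v) = 1 ∨ fe s(u,v) = 2 :=
    fun u v h => by have := hfe u v h; omega
  have F1 : ∀ u v : V, G.Adj u v → fv u = 2 → fv v = 1 → fe s(u,v) = 2 := by
    intro u v h h2 h1
    have := N1 u v h
    have := hfe u v h
    omega
  have F2 : ∀ u v : V, G.Adj u v → fv u = 1 → fv v = 1 → fe s(u,v) = 1 := by
    intro u v h h1 h1'
    have := N1 u v h
    have := hfe u v h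
    omega
  have F1' : ∀ u v : V, G.Adj u v → fe s(u,v) = 1 → fv u = 2 → fv v = 2 := by
    intro u v h he h2
    rcases hfv2 v with h1 | h1
    · have := F1 u v h h2 h1
      omega
    · exact h1
  -- parity across edges
  have hodd_edge : ∀ u v : V, G.Adj u v → (tSum G fv fe u + tSum G fv fe v) % 2 = 1 := by
    intro u v huv
    have hx := hX u v huv
    rcases hparity with ⟨he, ho⟩ | ⟨he, ho⟩ <;> by_cases h : u ∈ X
    · have e1 := he u h
      have e2 := ho v (hx.mp h)
      rw [Nat.even_iff] at e1
      rw [Nat.odd_iff] at e2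
      omega
    · have hv : v ∈ X := not_not.mp (fun hvn => h (hx.mpr hvn))
      have e1 := ho u h
      have e2 := he v hv
      rw [Nat.even_iff] at e2
      rw [Nat.odd_iff] at e1
      omega
    · have e1 := he u h
      have e2 := ho v (hx.mp h)
      rw [Nat.even_iff] at e2
      rw [Nat.odd_iff] at e1
      omega
    · have hv : v ∈ X := not_not.mp (fun hvn => h (hx.mpr hvn))
      have e1 := ho u h
      have e2 := he v hv
      rw [Nat.even_iff] at e1
      rw [Nat.odd_iff] at e2
      omega
  -- 1-degree
  set D : V → ℕ := fun v => ((G.neighborFinset v).filter (fun u => fe s(v,u) = 1)).card with hDdef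
  have hmemD : ∀ v u : V, u ∈ (G.neighborFinset v).filter (fun u => fe s(v,u) = 1) ↔
      (G.Adj v u ∧ fe s(v,u) = 1) := by
    intro v u
    simp [SimpleGraph.mem_neighborFinset]
  have hD_ge1 : ∀ v u : V, G.Adj v u → fe s(v,u) = 1 → 1 ≤ D v := by
    intro v u h he
    exact Finset.card_pos.mpr ⟨u, (hmemD v u).mpr ⟨h, he⟩⟩
  have hD_ge2 : ∀ v u u' : V, G.Adj v u → fe s(v,u) = 1 → G.Adj v u' → fe s(v,u') = 1 →
      u ≠ u' → 2 ≤ D v := by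
    intro v u u' h he h' he' hne
    exact Finset.one_lt_card.mpr ⟨u, (hmemD v u).mpr ⟨h, he⟩, u', (hmemD v u').mpr ⟨h', he'⟩, hne⟩
  have hD_ex : ∀ v : V, 1 ≤ D v → ∃ u, G.Adj v u ∧ fe s(v,u) = 1 := by
    intro v h
    obtain ⟨u, hu⟩ := Finset.card_pos.mp h
    exact ⟨u, (hmemD v u).mp hu⟩
  have hD_ex2 : ∀ v a : V, 2 ≤ D v → ∃ u, G.Adj v u ∧ fe s(v,u) = 1 ∧ u ≠ a := by
    intro v a h
    obtain ⟨u, hu, hune⟩ := Finset.exists_mem_ne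
      (s := (G.neighborFinset v).filter (fun u => fe s(v,u) = 1))
      (by simp only [hDdef] at h; omega) a
    obtain ⟨h1, h2⟩ := (hmemD v u).mp hu
    exact ⟨u, h1, h2, hune⟩
  -- tSum parity formula
  have htS : ∀ v, tSum G fv fe v % 2 = (fv v + D v) % 2 := by
    intro v
    have hv1 : vSum G fe v % 2 = D v % 2 := by
      have e1 : vSum G fe v % 2 = (∑ u ∈ G.neighborFinset v, fe s(v,u) % 2) % 2 :=
        Finset.sum_nat_mod _ _ _
      have e2 : (∑ u ∈ G.neighborFinset v, fe s(v,u) % 2)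
          = ∑ u ∈ G.neighborFinset v, (if fe s(v,u) = 1 then 1 else 0) := by
        apply Finset.sum_congr rfl
        intro u hu
        have := hfe v u ((G.mem_neighborFinset v u).mp hu)
        split_ifs <;> omega
      rw [e1, e2, ← Finset.card_filter]
    simp only [tSum]
    omega
  have hDpar : ∀ u v : V, G.Adj u v → (fv u + D u + (fv v + D v)) % 2 = 1 := by
    intro u v h
    have h1 := htS u
    have h2 := htS v
    have h3 := hodd_edge u v h
    omega
  -- ∃ vertex coloured 2
  have hS : ∃ r, fv r = 2 := by
    by_contra hs
    push_neg at hs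
    have hall1 : ∀ v, fv v = 1 := by
      intro v
      rcases hfv2 v with h | h
      · exact h
      · exact absurd h (hs v)
    apply h2ne
    have hv0 : (Finset.univ.filter fun v => fv v = 2) = ∅ := by
      rw [Finset.filter_eq_empty_iff]
      intro v _
      rw [hall1 v]
      omega
    have he0 : (G.edgeFinset.filter fun e => fe e = 2) = ∅ := by
      rw [Finset.filter_eq_empty_iff]
      intro e he
      revert he
      induction e using Sym2.ind with
      | _ u v =>
        intro he
        have hadj : G.Adj u v := (SimpleGraph.mem_edgeSet G).mp (SimpleGraph.mem_edgeFinset.mp he)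
        have := F2 u v hadj (hall1 u) (hall1 v)
        omega
    simp only [totalClassCard, edgeClassCard, hv0, he0, Finset.card_empty]
  -- step 3': odd 1-degree 2-vertices have no 1-coloured-vertex neighbours
  have st3 : ∀ u w : V, G.Adj u w → fv u = 2 → fv w = 1 → D u % 2 = 1 → False := by
    intro u w huw hu2 hw1 hoddu
    obtain ⟨z, hz, hz1⟩ := hD_ex u (by omega)
    have hz2 : fv z = 2 := F1' u z hz hz1 hu2
    have hDz : D z % 2 = 0 := by
      have := hDpar u z hz
      omega
    have hz1' : fe s(z,u) = 1 := by rw [← hswap u z]; exact hz1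
    have hdz1 : 1 ≤ D z := hD_ge1 z u hz.symm hz1'
    obtain ⟨l, hladj, hlfe, hlne⟩ := hD_ex2 z u (by omega)
    have hl2 : fv l = 2 := F1' z l hladj hlfe hz2
    refine N3 l z u w hladj.symm hz.symm huw hlne ?_ ?_ ?_
    · intro h
      rw [h] at hl2
      omega
    · intro h
      rw [h] at hz2
      omega
    · have e1 : fe s(l,z) = 1 := by rw [← hswap z l]; exact hlfe
      have e2 : fe s(u,w) = 2 := F1 u w huw hu2 hw1
      omega
  -- C-independence: no edge between two 1-coloured vertices
  have hCind : ∀ w y : V, G.Adj w y → fv w = 1 → fv y = 1 → False := by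
    intro w y hwy hw1 hy1
    obtain ⟨r, hr⟩ := hS
    -- find a boundary attachment b-s with b having a 1-coloured neighbour
    have hfind : ∀ (a c : V) (p : G.Walk a c), fv a = 1 → fv c = 2 →
        (∃ x, G.Adj a x ∧ fv x = 1) →
        ∃ b sp, fv b = 1 ∧ fv sp = 2 ∧ G.Adj b sp ∧ ∃ x, G.Adj b x ∧ fv x = 1 := by
      intro a c p
      induction p with
      | nil =>
        intro h1 h2 _
        exact absurd (h1.symm.trans h2) (by norm_num)
      | @cons a x c h q ih =>
        intro h1 h2 hc
        rcases hfv2 x with hx1 | hx2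
        · exact ih hx1 h2 ⟨a, h.symm, h1⟩
        · exact ⟨a, x, h1, hx2, h, hc⟩
    obtain ⟨p⟩ := hconn.preconnected w r
    obtain ⟨b, sp, hb1, hs2, hbs, c0, hbc0, hc01⟩ := hfind w r p hw1 hr ⟨y, hwy, hy1⟩
    have hds : D sp % 2 = 0 := by
      rcases Nat.mod_two_eq_zero_or_one (D sp) with h | h
      · exact h
      · exact absurd (st3 sp b hbs.symm hs2 hb1 h) not_false
    have hdb_even : D b % 2 = 0 := by
      have := hDpar b sp hbs
      omega
    have hfebc : fe s(b,c0) = 1 := F2 b c0 hbc0 hb1 hc01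
    have hdb2 : 2 ≤ D b := by
      have := hD_ge1 b c0 hbc0 hfebc
      omega
    -- any 1-edge neighbour of b is coloured 1
    have hnb1 : ∀ u : V, G.Adj b u → fe s(b,u) = 1 → fv u = 1 := by
      intro u hu he1
      rcases hfv2 u with h | h
      · exact h
      · have h2 := F1 u b hu.symm h hb1
        rw [← hswap b u] at h2
        omega
    have hA1 : ∀ yy z : V, G.Adj b yy → fv yy = 1 → G.Adj yy z → z ≠ b → fv z = 1 → False := by
      intro yy z h1 hyy1 h2 hzb hz1
      refine N3 sp b yy z hbs.symm h1 h2 ?_ ?_ hzb.symm ?_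
      · intro h
        rw [h] at hs2
        omega
      · intro h
        rw [h] at hs2
        omega
      · have e1 : fe s(sp,b) = 2 := F1 sp b hbs.symm hs2 hb1
        have e2 : fe s(b,yy) = 1 := F2 b yy h1 hb1 hyy1
        have e3 : fe s(yy,z) = 1 := F2 yy z h2 hyy1 hz1
        omega
    have hA2 : ∀ yy t : V, G.Adj b yy → fv yy = 1 → G.Adj yy t → fv t = 2 → False := by
      intro yy t h1 hyy1 h2 ht2
      obtain ⟨y', hy'adj, hy'fe, hy'ne⟩ := hD_ex2 b yy hdb2
      have hy'1 : fv y' = 1 := hnb1 y' hy'adj hy'fe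
      refine N3 y' b yy t hy'adj.symm h1 h2 hy'ne ?_ ?_ ?_
      · intro h
        rw [h] at hy'1
        omega
      · intro h
        rw [h] at hb1
        omega
      · have e1 : fe s(y',b) = 1 := by rw [← hswap b y']; exact hy'fe
        have e2 : fe s(b,yy) = 1 := F2 b yy h1 hb1 hyy1
        have e3 : fe s(yy,t) = 2 := by
          rw [hswap yy t]
          exact F1 t yy h2.symm ht2 hyy1
        omega
    have hB : ∀ s' u : V, G.Adj b s' → fv s' = 2 → G.Adj s' u → u ≠ b → False := by
      intro s' u hbs' hs'2 hs'u hub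
      obtain ⟨yy, hyadj, hyfe, hyne⟩ := hD_ex2 b u hdb2
      have hyy1 : fv yy = 1 := hnb1 yy hyadj hyfe
      have es'b : fe s(s',b) = 2 := F1 s' b hbs'.symm hs'2 hb1
      have ebyy : fe s(b,yy) = 1 := hyfe
      have hs'yy : s' ≠ yy := by
        intro h
        rw [h] at hs'2
        omega
      rcases hfv2 u with hu1 | hu2
      · refine N3 u s' b yy hs'u.symm hbs'.symm hyadj hub hyne.symm hs'yy ?_
        have e1 : fe s(u,s') = 2 := by
          rw [hswap u s']
          exact F1 s' u hs'u hs'2 hu1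
        omega
      · rcases hfe2 s' u hs'u with hfee1 | hfee2
        · refine N3 u s' b yy hs'u.symm hbs'.symm hyadj hub hyne.symm hs'yy ?_
          have e1 : fe s(u,s') = 1 := by rw [hswap u s']; exact hfee1
          omega
        · have hds' : D s' % 2 = 0 := by
            rcases Nat.mod_two_eq_zero_or_one (D s') with h | h
            · exact h
            · exact absurd (st3 s' b hbs'.symm hs'2 hb1 h) not_false
          have hdu_odd : D u % 2 = 1 := by
            have := hDpar s' u hs'u
            omega
          obtain ⟨z, hzadj, hzfe⟩ := hD_ex u (by omega)
          have hz2 : fv z = 2 := F1' u z hzadj hzfe hu2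
          have hdz_even : D z % 2 = 0 := by
            have := hDpar u z hzadj
            omega
          have hdz1 : 1 ≤ D z := hD_ge1 z u hzadj.symm (by rw [← hswap u z]; exact hzfe)
          obtain ⟨l, hladj, hlfe, hlne⟩ := hD_ex2 z u (by omega)
          have hl2 : fv l = 2 := F1' z l hladj hlfe hz2
          have hdl_odd : D l % 2 = 1 := by
            have := hDpar z l hladj
            omega
          refine N5 l z u s' b yy hladj.symm hzadj.symm hs'u.symm hbs'.symm hyadj
            hlne ?_ ?_ ?_ ?_ ?_ ?_ hub hyne.symm hs'yy ?_
          · intro h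
            rw [h] at hdl_odd
            omega
          · intro h
            rw [h] at hl2
            omega
          · intro h
            rw [h] at hl2
            omega
          · intro h
            rw [h] at hzfe
            have : fe s(u,s') = 2 := by rw [hswap u s']; exact hfee2
            omega
          · intro h
            rw [h] at hz2
            omega
          · intro h
            rw [h] at hz2
            omega
          · have e1 : fe s(l,z) = 1 := by rw [← hswap z l]; exact hlfe
            have e2 : fe s(z,u) = 1 := by rw [← hswap u z]; exact hzfe
            have e3 : fe s(u,s') = 2 := by rw [hswap u s']; exact hfee2
            omega
    -- G is a star centred at b: contradiction
    have hstep : ∀ x v : V, (x = b ∨ (G.Adj b x ∧ ∀ u, G.Adj x u → u = b)) → G.Adj x v →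
        (v = b ∨ (G.Adj b v ∧ ∀ u, G.Adj v u → u = b)) := by
      intro x v hx hxv
      rcases hx with rfl | ⟨hadj, hall⟩
      · right
        refine ⟨hxv, ?_⟩
        intro u hvu
        by_contra hub
        rcases hfv2 v with hv1 | hv2
        · rcases hfv2 u with hu1 | hu2
          · exact hA1 v u hxv hv1 hvu hub hu1
          · exact hA2 v u hxv hv1 hvu hu2
        · exact hB v u hxv hv2 hvu hub
      · exact Or.inl (hall v hxv)
    have hP : ∀ v : V, v = b ∨ (G.Adj b v ∧ ∀ u, G.Adj v u → u = b) := by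
      have hwalk : ∀ (a c : V) (p : G.Walk a c),
          (a = b ∨ (G.Adj b a ∧ ∀ u, G.Adj a u → u = b)) →
          (c = b ∨ (G.Adj b c ∧ ∀ u, G.Adj c u → u = b)) := by
        intro a c p
        induction p with
        | nil => exact id
        | @cons a x c h q ih => exact fun ha => ih (hstep a x ha h)
      intro v
      exact hwalk b v (hconn.preconnected b v).some (Or.inl rfl)
    obtain ⟨e, heE, hbe⟩ := hnotstar b
    revert heE hbe
    induction e using Sym2.ind with
    | _ u1 u2 =>
      intro heE hbe
      have hadj : G.Adj u1 u2 := (SimpleGraph.mem_edgeSet G).mp heE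
      rcases hP u1 with rfl | ⟨-, hall⟩
      · exact hbe (Sym2.mem_mk_left _ _)
      · exact hbe (by rw [hall u2 hadj]; exact Sym2.mem_mk_right _ _)
  -- every vertex has a neighbour
  have hnonempty : ∀ v : V, ∃ u, G.Adj v u := by
    intro v
    obtain ⟨e, heE, hve⟩ := hnotstar v
    revert heE hve
    induction e using Sym2.ind with
    | _ a bb =>
      intro heE hve
      have hvna : v ≠ a := fun h => hve (h ▸ Sym2.mem_mk_left a bb)
      obtain ⟨p⟩ := hconn.preconnected v a
      cases p with
      | nil => exact absurd rfl hvna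
      | cons h q => exact ⟨_, h⟩
  -- each 1-edge owns a 2-vertex of 1-degree one
  have key1 : ∀ e : Sym2 V, ∃ x : V, e ∈ G.edgeFinset → fe e = 1 → (x ∈ e ∧ fv x = 2 ∧ D x = 1) := by
    intro e
    induction e using Sym2.ind with
    | _ u v =>
      by_cases hE : s(u,v) ∈ G.edgeFinset
      · by_cases h1 : fe s(u,v) = 1
        · have hadj : G.Adj u v := (SimpleGraph.mem_edgeSet G).mp (SimpleGraph.mem_edgeFinset.mp hE)
          have hu2 : fv u = 2 := by
            rcases hfv2 u with h | h
            · rcases hfv2 v with h' | h'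
              · exact absurd (hCind u v hadj h h') not_false
              · have h2 := F1 v u hadj.symm h' h
                rw [← hswap u v] at h2
                omega
            · exact h
          have hv2 : fv v = 2 := F1' u v hadj h1 hu2
          have hDor : D u = 1 ∨ D v = 1 := by
            by_contra hcon
            push_neg at hcon
            have hdu2 : 2 ≤ D u := by
              have := hD_ge1 u v hadj h1
              omega
            have hdv2 : 2 ≤ D v := by
              have := hD_ge1 v u hadj.symm (by rw [← hswap u v]; exact h1)
              omega
            obtain ⟨u', hu'adj, hu'fe, hu'ne⟩ := hD_ex2 u v hdu2
            obtain ⟨v', hv'adj, hv'fe, hv'ne⟩ := hD_ex2 v u hdv2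
            have huv' : u' ≠ v' := by
              intro h
              subst h
              have b1 := hX u u' hu'adj
              have b2 := hX v u' hv'adj
              have b3 := hX u v hadj
              tauto
            refine N3 u' u v v' hu'adj.symm hadj hv'adj hu'ne huv' hv'ne.symm ?_
            have e1 : fe s(u',u) = 1 := by rw [← hswap u u']; exact hu'fe
            have hu'2 : fv u' = 2 := F1' u u' hu'adj hu'fe hu2
            have hv'2 : fv v' = 2 := F1' v v' hv'adj hv'fe hv2
            omega
          rcases hDor with h | h
          · exact ⟨u, fun _ _ => ⟨Sym2.mem_mk_left u v, hu2, h⟩⟩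
          · exact ⟨v, fun _ _ => ⟨Sym2.mem_mk_right u v, hv2, h⟩⟩
        · exact ⟨u, fun _ h => absurd h h1⟩
      · exact ⟨u, fun h => absurd h hE⟩
  choose φ hφ using key1
  have c1 : (G.edgeFinset.filter (fun e => fe e = 1)).card
      ≤ (Finset.univ.filter (fun v => fv v = 2)).card := by
    apply Finset.card_le_card_of_injOn φ
    · intro e he
      rw [Finset.mem_coe, Finset.mem_filter] at he
      obtain ⟨-, h2, -⟩ := hφ e he.1 he.2
      simp [h2]
    · intro e he e' he' heq
      simp only [Finset.coe_filter, Set.mem_setOf_eq] at he he'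
      obtain ⟨hx1, -, hd1⟩ := hφ e he.1 he.2
      obtain ⟨hx1', -, -⟩ := hφ e' he'.1 he'.2
      by_contra hne
      rw [← heq] at hx1'
      obtain ⟨a, hea⟩ := Sym2.mem_iff_exists.mp hx1
      obtain ⟨a', hea'⟩ := Sym2.mem_iff_exists.mp hx1'
      have haa : a ≠ a' := by
        intro h
        apply hne
        rw [hea, hea', h]
      have hadj : G.Adj (φ e) a := by
        have := he.1
        rw [hea] at this
        exact (SimpleGraph.mem_edgeSet G).mp (SimpleGraph.mem_edgeFinset.mp this)
      have hadj' : G.Adj (φ e) a' := by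
        have := he'.1
        rw [hea'] at this
        exact (SimpleGraph.mem_edgeSet G).mp (SimpleGraph.mem_edgeFinset.mp this)
      have hfea : fe s(φ e, a) = 1 := by
        rw [← hea]
        exact he.2
      have hfea' : fe s(φ e, a') = 1 := by
        rw [← hea']
        exact he'.2
      have := hD_ge2 (φ e) a a' hadj hfea hadj' hfea' haa
      omega
  choose nb hnb using hnonempty
  have c2 : (Finset.univ.filter (fun v => fv v = 1)).card
      ≤ (G.edgeFinset.filter (fun e => fe e = 2)).card := by
    apply Finset.card_le_card_of_injOn (fun v => s(v, nb v))
    · intro v hv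
      have hv1 : fv v = 1 := (Finset.mem_filter.mp (Finset.mem_coe.mp hv)).2
      have hnb2 : fv (nb v) = 2 := by
        rcases hfv2 (nb v) with h | h
        · exact absurd (hCind v (nb v) (hnb v) hv1 h) not_false
        · exact h
      simp only [Finset.coe_filter, Set.mem_setOf_eq, Finset.mem_coe, Finset.mem_filter]
      constructor
      · rw [SimpleGraph.mem_edgeFinset]
        exact (SimpleGraph.mem_edgeSet G).mpr (hnb v)
      · rw [hswap]
        exact F1 (nb v) v (hnb v).symm hnb2 hv1
    · intro v hv v' hv' heq
      have hvm : fv v = 1 := (Finset.mem_filter.mp (Finset.mem_coe.mp hv)).2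
      have hvm' : fv v' = 1 := (Finset.mem_filter.mp (Finset.mem_coe.mp hv')).2
      rcases Sym2.eq_iff.mp heq with ⟨h, -⟩ | ⟨h1, h2⟩
      · exact h
      · exfalso
        have hadj : G.Adj v' v := by
          have := hnb v'
          rw [← h1] at this
          exact this
        exact hCind v' v hadj hvm' hvm
  have hfinal : totalClassCard G fv fe 1 ≤ totalClassCard G fv fe 2 := by
    simp only [totalClassCard, edgeClassCard]
    omega
  omega
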